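/- A Markov transition kernel P on a measurable space satisfying the Doeblin condition P(x, B) ≥ (1-δ)·Ψ(B) for all x and all measurable B, where 0 < δ < 1 and Ψ is a probability measure, has at most one stationary probability distribution. -/

import Mathlib

open MeasureTheory
open scoped ENNReal

theorem stmt_11 {α : Type*} [MeasurableSpace α]
    (δ : ℝ≥0∞) (hδ0 : 0 < δ) (hδ1 : δ < 1)
    (P : α → Measure α) (Ψ : Measure α)
    [∀ x, IsProbabilityMeasure (P x)] [IsProbabilityMeasure Ψ]
    (hPmeas : Measurable P)
    (hDoeblin : ∀ x, ∀ B : Set α, MeasurableSet B → (1 - δ) * Ψ B ≤ P x B)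
    (μ ν : Measure α) [IsProbabilityMeasure μ] [IsProbabilityMeasure ν]
    (hμ : μ.bind P = μ) (hν : ν.bind P = ν) : μ = ν := by
  set κ : Measure α := μ ⊓ ν with hκdef
  have hκμ : κ ≤ μ := inf_le_left
  have hκν : κ ≤ ν := inf_le_right
  have hκfin : IsFiniteMeasure κ := isFiniteMeasure_of_le μ hκμ
  set μ' : Measure α := μ - κ with hμ'def
  set ν' : Measure α := ν - κ with hν'def
  have hμdec : μ' + κ = μ := Measure.sub_add_cancel_of_le hκμ
  have hνdec : ν' + κ = ν := Measure.sub_add_cancel_of_le hκν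
  -- total masses
  have hmfin : κ Set.univ ≠ ∞ := by
    exact ne_of_lt (lt_of_le_of_lt (le_trans (hκμ Set.univ) (by simp)) ENNReal.one_lt_top)
  have hμ'univ : μ' Set.univ + κ Set.univ = 1 := by
    have := congrArg (fun ρ : Measure α => ρ Set.univ) hμdec
    simpa using this
  have hν'univ : ν' Set.univ + κ Set.univ = 1 := by
    have := congrArg (fun ρ : Measure α => ρ Set.univ) hνdec
    simpa using this
  have hsame : μ' Set.univ = ν' Set.univ :=
    WithTop.add_right_cancel hmfin (hμ'univ.trans hν'univ.symm)
  -- bind preserves total mass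
  have hbind_univ : ∀ ρ : Measure α, ρ.bind P Set.univ = ρ Set.univ := by
    intro ρ
    rw [Measure.bind_apply MeasurableSet.univ hPmeas.aemeasurable]
    simp
  -- bind is additive
  have hbind_add : ∀ ρ₁ ρ₂ : Measure α, (ρ₁ + ρ₂).bind P = ρ₁.bind P + ρ₂.bind P := by
    intro ρ₁ ρ₂
    ext B hB
    rw [Measure.add_apply, Measure.bind_apply hB hPmeas.aemeasurable,
      Measure.bind_apply hB hPmeas.aemeasurable, Measure.bind_apply hB hPmeas.aemeasurable,
      lintegral_add_measure]
  -- Doeblin lower bound on binds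
  have hbind_lb : ∀ ρ : Measure α, (ρ Set.univ * (1 - δ)) • Ψ ≤ ρ.bind P := by
    intro ρ
    refine Measure.le_iff.mpr fun B hB => ?_
    rw [Measure.smul_apply, smul_eq_mul, Measure.bind_apply hB hPmeas.aemeasurable]
    calc ρ Set.univ * (1 - δ) * Ψ B = ∫⁻ _, (1 - δ) * Ψ B ∂ρ := by
          rw [lintegral_const]; ring
      _ ≤ ∫⁻ x, P x B ∂ρ := lintegral_mono fun x => hDoeblin x B hB
  set c : ℝ≥0∞ := μ' Set.univ * (1 - δ) with hcdef
  -- lower bounds on μ and ν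
  have hμlb : κ.bind P + c • Ψ ≤ μ := by
    calc κ.bind P + c • Ψ ≤ κ.bind P + μ'.bind P := by
          exact add_le_add le_rfl (hbind_lb μ')
      _ = (μ' + κ).bind P := by rw [hbind_add, add_comm]
      _ = μ := by rw [hμdec, hμ]
  have hνlb : κ.bind P + c • Ψ ≤ ν := by
    calc κ.bind P + c • Ψ ≤ κ.bind P + ν'.bind P := by
          refine add_le_add le_rfl ?_
          rw [hcdef, hsame]
          exact hbind_lb ν'
      _ = (ν' + κ).bind P := by rw [hbind_add, add_comm]
      _ = ν := by rw [hνdec, hν]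
  have hκlb : κ.bind P + c • Ψ ≤ κ := le_inf hμlb hνlb
  -- evaluate at univ : κ univ + c ≤ κ univ
  have hmass : κ Set.univ + c ≤ κ Set.univ := by
    have := Measure.le_iff'.mp hκlb Set.univ
    simpa [hbind_univ κ] using this
  have hc0 : c = 0 := by
    have h2 : κ Set.univ + c ≤ κ Set.univ + 0 := by simpa using hmass
    exact le_antisymm (ENNReal.le_of_add_le_add_left hmfin h2) zero_le
  have hδne : (1 : ℝ≥0∞) - δ ≠ 0 := by
    simp [tsub_eq_zero_iff_le, not_le.mpr hδ1]
  have hμ'0 : μ' Set.univ = 0 := by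
    rcases mul_eq_zero.mp hc0 with h | h
    · exact h
    · exact absurd h hδne
  have hν'0 : ν' Set.univ = 0 := hsame ▸ hμ'0
  have hμ'z : μ' = 0 := Measure.measure_univ_eq_zero.mp hμ'0
  have hν'z : ν' = 0 := Measure.measure_univ_eq_zero.mp hν'0
  calc μ = μ' + κ := hμdec.symm
    _ = ν' + κ := by rw [hμ'z, hν'z]
    _ = ν := hνdec
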